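/- A family F ⊂ X of paths is relatively compact if and only if (i) the set {(i(f), f(i(f))) : f ∈ F} is relatively compact in ℝ × M, and (ii) for every ε > 0 and every C ≥ sup{i(f) : f ∈ F}, there exists α > 0 such that for all f ∈ F and all r₁, r₂ ∈ [i(f), C] with |r₂ − r₁| < α, one has ρ(f(r₁), f(r₂)) < ε. -/

import Mathlib

set_option maxHeartbeats 1000000
set_option synthInstance.maxHeartbeats 200000


open Set Filter Topology

/-- The space `X` of continuous paths in `M` with arbitrary starting times, represented as
pairs `(s, f)` where `f : ℝ → M` is continuous and constant on `(-∞, s]` (the canonical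
extension of a path `f : [s,∞) → M`).  The (subspace of the) product topology, where
`C(ℝ, M)` carries the compact-open topology (= uniform convergence on compact sets),
coincides with the topology of the metric `d` of the paper. -/
def PathSpace (M : Type*) [MetricSpace M] : Type _ :=
  {p : ℝ × C(ℝ, M) // ∀ t ≤ p.1, p.2 t = p.2 p.1}

instance (M : Type*) [MetricSpace M] : TopologicalSpace (PathSpace M) :=
  instTopologicalSpaceSubtype

namespace PathSpaceAux

variable {M : Type*} [MetricSpace M]

lemma isClosed_constraint :
    IsClosed {q : ℝ × C(ℝ, M) | ∀ t ≤ q.1, q.2 t = q.2 q.1} := by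
  have h : {q : ℝ × C(ℝ, M) | ∀ t ≤ q.1, q.2 t = q.2 q.1}
      = ⋂ t : ℝ, {q : ℝ × C(ℝ, M) | q.2 (min t q.1) = q.2 q.1} := by
    ext q
    simp only [Set.mem_setOf_eq, Set.mem_iInter]
    constructor
    · exact fun h t => h _ (min_le_right _ _)
    · intro h t ht; have := h t; rwa [min_eq_left ht] at this
  rw [h]
  refine isClosed_iInter fun t => isClosed_eq ?_ ?_
  · exact ContinuousEval.continuous_eval.comp
      (continuous_snd.prodMk (continuous_const.min continuous_fst))
  · exact ContinuousEval.continuous_eval.comp (continuous_snd.prodMk continuous_fst)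

lemma clemb : IsClosedEmbedding (UniformOnFun.ofFun {K : Set ℝ | IsCompact K} ∘
    (fun g : C(ℝ, M) => (g : ℝ → M))) := by
  refine ⟨ContinuousMap.isUniformEmbedding_toUniformOnFunIsCompact.isEmbedding, ?_⟩
  have h : range (UniformOnFun.ofFun {K : Set ℝ | IsCompact K} ∘ (fun g : C(ℝ, M) => (g : ℝ → M)))
      = {f : UniformOnFun ℝ M {K | IsCompact K} | Continuous (UniformOnFun.toFun _ f)} :=
    ContinuousMap.range_toUniformOnFunIsCompact
  rw [h]
  exact UniformOnFun.isClosed_setOf_continuous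
    CompactlyCoherentSpace.isCoherentWith

lemma chain (F : Set (PathSpace M)) (C α : ℝ) (hα : 0 < α)
    (h : ∀ p ∈ F, ∀ r₁ r₂ : ℝ, p.val.1 ≤ r₁ → r₁ ≤ C → p.val.1 ≤ r₂ → r₂ ≤ C →
      |r₂ - r₁| < α → dist (p.val.2 r₁) (p.val.2 r₂) < 1) :
    ∀ n : ℕ, ∀ p ∈ F, ∀ r, p.val.1 ≤ r → r ≤ C → r - p.val.1 ≤ n * (α / 2) →
      dist (p.val.2 p.val.1) (p.val.2 r) ≤ n := by
  intro n
  induction n with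
  | zero =>
    intro p hp r h1 h2 h3
    have : r = p.val.1 := le_antisymm (by push_cast at h3; linarith) h1
    simp [this]
  | succ n ih =>
    intro p hp r h1 h2 h3
    set r' := max p.val.1 (r - α / 2) with hr'
    have h1' : p.val.1 ≤ r' := le_max_left _ _
    have h2' : r' ≤ C := max_le (le_trans h1 h2) (by linarith)
    have h4 : r' - p.val.1 ≤ n * (α / 2) := by
      rcases max_cases p.val.1 (r - α / 2) with ⟨he, _⟩ | ⟨he, _⟩ <;> rw [hr', he] <;>
        push_cast at h3 ⊢ <;> nlinarith [Nat.cast_nonneg (α := ℝ) n]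
    have h5 : |r - r'| < α := by
      have hle : r' ≤ r := max_le h1 (by linarith)
      have h6 : r - r' ≤ α / 2 := by
        have := le_max_right p.val.1 (r - α / 2); rw [← hr'] at this; linarith
      rw [abs_of_nonneg (by linarith)]; linarith
    have hd := h p hp r' r h1' h2' h1 h2 h5
    calc dist (p.val.2 p.val.1) (p.val.2 r)
        ≤ dist (p.val.2 p.val.1) (p.val.2 r') + dist (p.val.2 r') (p.val.2 r) :=
          dist_triangle _ _ _
      _ ≤ (n : ℝ) + 1 := by
          have := ih p hp r' h1' h2' h4
          linarith
      _ = ((n + 1 : ℕ) : ℝ) := by push_cast; ring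

end PathSpaceAux

/-- **Ascoli–Arzelà theorem for the path space `X`.** A family `F ⊆ X` is relatively
compact if and only if (i) the set of starting points `{(i(f), f(i(f))) : f ∈ F}` is
relatively compact in `ℝ × M`, and (ii) for every `ε > 0` and every upper bound `C` of
the starting times of members of `F`, there is `α > 0` such that for every `f ∈ F` and
all `r₁, r₂ ∈ [i(f), C]` with `|r₂ − r₁| < α` one has `ρ(f(r₁), f(r₂)) < ε`. -/
theorem pathSpace_relatively_compact_iff
    {M : Type*} [MetricSpace M] [ProperSpace M] [TopologicalSpace.SeparableSpace M]
    (F : Set (PathSpace M)) :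
    IsCompact (closure F) ↔
      (IsCompact (closure ((fun p : PathSpace M => (p.val.1, p.val.2 p.val.1)) '' F)) ∧
       ∀ ε : ℝ, 0 < ε → ∀ C : ℝ, (∀ p ∈ F, p.val.1 ≤ C) →
         ∃ α : ℝ, 0 < α ∧ ∀ p ∈ F, ∀ r₁ r₂ : ℝ,
           p.val.1 ≤ r₁ → r₁ ≤ C → p.val.1 ≤ r₂ → r₂ ≤ C → |r₂ - r₁| < α →
             dist (p.val.2 r₁) (p.val.2 r₂) < ε) := by
  haveI : SecondCountableTopology M :=
    UniformSpace.secondCountable_of_separable M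
  haveI hsc2 : SecondCountableTopology C(ℝ, M) := ContinuousMap.instSecondCountableTopology
  haveI : SecondCountableTopology (ℝ × C(ℝ, M)) := inferInstance
  haveI : FirstCountableTopology (PathSpace M) :=
    Topology.IsInducing.subtypeVal.firstCountableTopology
  constructor
  · intro hcpt
    constructor
    · -- (i)
      have gc : Continuous (fun p : PathSpace M => (p.val.1, p.val.2 p.val.1)) := by
        refine Continuous.prodMk (continuous_fst.comp continuous_subtype_val) ?_
        exact ContinuousEval.continuous_eval.comp
          ((continuous_snd.comp continuous_subtype_val).prodMk
            (continuous_fst.comp continuous_subtype_val))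
      have himg : IsCompact ((fun p : PathSpace M => (p.val.1, p.val.2 p.val.1)) '' closure F) :=
        hcpt.image gc
      exact himg.of_isClosed_subset isClosed_closure
        (closure_minimal (image_mono subset_closure) himg.isClosed)
    · -- (ii)
      intro ε hε C hC
      by_contra hcon
      push_neg at hcon
      choose p hpF r₁ r₂ h1 h2 h3 h4 h5 h6 using
        fun n : ℕ => hcon (1 / (n + 1)) (by positivity)
      obtain ⟨R, hR⟩ : ∃ R : ℝ, ∀ q ∈ closure F, |(Subtype.val q).1| ≤ R := by
        have h1c : IsCompact ((fun q : PathSpace M => (Subtype.val q).1) '' closure F) :=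
          hcpt.image (continuous_fst.comp continuous_subtype_val)
        obtain ⟨R, hR⟩ := h1c.isBounded.subset_closedBall 0
        exact ⟨R, fun q hq => by simpa [Real.dist_eq] using hR (mem_image_of_mem _ hq)⟩
      have hseq : IsSeqCompact (closure F) := hcpt.isSeqCompact
      obtain ⟨q, hqcl, φ, hφ, hφt⟩ := hseq (fun n => subset_closure (hpF n))
      have hIcc : IsSeqCompact (Icc (-R) C) := isCompact_Icc.isSeqCompact
      obtain ⟨r, hr, ψ, hψ, hψt⟩ := hIcc (x := fun n => r₁ (φ n)) (fun n =>
        ⟨le_trans (neg_le_of_abs_le (hR _ (subset_closure (hpF (φ n))))) (h1 (φ n)),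
          h2 (φ n)⟩)
      set σ : ℕ → ℕ := φ ∘ ψ with hσ
      have hσmono : StrictMono σ := hφ.comp hψ
      have hr2 : Tendsto (fun n => r₂ (σ n)) atTop (𝓝 r) := by
        have hd : Tendsto (fun n => r₂ (σ n) - r₁ (σ n)) atTop (𝓝 0) := by
          apply squeeze_zero_norm (fun n => ?_) tendsto_one_div_add_atTop_nhds_zero_nat
          have hlt : |r₂ (σ n) - r₁ (σ n)| < 1 / (σ n + 1) := h5 (σ n)
          have hle : (1 : ℝ) / (σ n + 1) ≤ 1 / (n + 1) := by
            apply one_div_le_one_div_of_le (by positivity)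
            have h7 : n ≤ σ n := hσmono.le_apply
            have h8 : (n : ℝ) ≤ σ n := Nat.cast_le.2 h7
            linarith
          exact le_of_lt (lt_of_lt_of_le hlt hle)
        have hψt' : Tendsto (fun n => r₁ (σ n)) atTop (𝓝 r) := hψt
        have hadd := hd.add hψt'
        rw [zero_add] at hadd
        exact hadd.congr (fun n => by ring)
      have hu : Tendsto (fun n => (Subtype.val (p (σ n))).2) atTop (𝓝 (Subtype.val q).2) := by
        have : Tendsto (fun n => p (σ n)) atTop (𝓝 q) := hφt.comp hψ.tendsto_atTop
        exact ((continuous_snd.comp continuous_subtype_val).tendsto q).comp this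
      have he1 : Tendsto (fun n => (Subtype.val (p (σ n))).2 (r₁ (σ n))) atTop
          (𝓝 ((Subtype.val q).2 r)) :=
        (ContinuousEval.continuous_eval.tendsto ((Subtype.val q).2, r)).comp (hu.prodMk_nhds hψt)
      have he2 : Tendsto (fun n => (Subtype.val (p (σ n))).2 (r₂ (σ n))) atTop
          (𝓝 ((Subtype.val q).2 r)) :=
        (ContinuousEval.continuous_eval.tendsto ((Subtype.val q).2, r)).comp (hu.prodMk_nhds hr2)
      have hdist := he1.dist he2
      rw [dist_self] at hdist
      have hfin : ε ≤ 0 := ge_of_tendsto hdist (Eventually.of_forall fun n => h6 (σ n))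
      linarith
  · rintro ⟨h₁, h₂⟩
    have hmemK₀ : ∀ p ∈ F, (p.val.1, p.val.2 p.val.1) ∈
        closure ((fun p : PathSpace M => (p.val.1, p.val.2 p.val.1)) '' F) :=
      fun p hp => subset_closure (mem_image_of_mem _ hp)
    obtain ⟨R, hR⟩ : ∃ R : ℝ, ∀ p ∈ F, |p.val.1| ≤ R := by
      obtain ⟨R, hR⟩ := (h₁.image continuous_fst).isBounded.subset_closedBall 0
      exact ⟨R, fun p hp => by simpa [Real.dist_eq] using hR (mem_image_of_mem _ (hmemK₀ p hp))⟩
    have hb : ∀ p ∈ F, p.val.1 ≤ R := fun p hp => (abs_le.1 (hR p hp)).2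
    set K₂ : Set M := Prod.snd '' closure ((fun p : PathSpace M => (p.val.1, p.val.2 p.val.1)) '' F)
      with hK₂def
    have hK₂ : IsCompact K₂ := h₁.image continuous_snd
    have hmemK₂ : ∀ p ∈ F, p.val.2 p.val.1 ∈ K₂ := fun p hp => mem_image_of_mem _ (hmemK₀ p hp)
    set s : Set C(ℝ, M) := (fun p : PathSpace M => p.val.2) '' F with hsdef
    -- equicontinuity of s
    have heq : Equicontinuous (fun g : s => (g.val : ℝ → M)) := by
      intro t₀
      rw [Metric.equicontinuousAt_iff]
      intro ε hε
      obtain ⟨α, hα, hmod⟩ := h₂ ε hε (max R (t₀ + 1))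
        (fun p hp => le_max_of_le_left (hb p hp))
      refine ⟨min α 1, lt_min hα one_pos, fun x hx gg => ?_⟩
      obtain ⟨p, hpF, hpg⟩ := gg.prop
      have hkey : ∀ z : ℝ, p.val.2 z = p.val.2 (max z p.val.1) := by
        intro z
        rcases le_total p.val.1 z with h | h
        · rw [max_eq_left h]
        · rw [max_eq_right h]; exact p.prop z h
      have hy₁C : max t₀ p.val.1 ≤ max R (t₀ + 1) :=
        max_le (le_max_of_le_right (by linarith)) (le_max_of_le_left (hb p hpF))
      have hxt : |x - t₀| < min α 1 := by rwa [Real.dist_eq] at hx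
      have hy₂C : max x p.val.1 ≤ max R (t₀ + 1) := by
        have : x ≤ t₀ + 1 := by
          have := (abs_lt.1 hxt).2
          have := min_le_right α 1
          linarith [min_le_right α (1:ℝ)]
        exact max_le (le_max_of_le_right this) (le_max_of_le_left (hb p hpF))
      have hdiff : |max x p.val.1 - max t₀ p.val.1| < α :=
        lt_of_le_of_lt (abs_max_sub_max_le_abs _ _ _)
          (lt_of_lt_of_le hxt (min_le_left _ _))
      have hd := hmod p hpF (max t₀ p.val.1) (max x p.val.1) (le_max_right _ _) hy₁C
        (le_max_right _ _) hy₂C hdiff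
      have e1 : (gg.val : ℝ → M) t₀ = p.val.2 (max t₀ p.val.1) := by rw [← hpg]; exact hkey t₀
      have e2 : (gg.val : ℝ → M) x = p.val.2 (max x p.val.1) := by rw [← hpg]; exact hkey x
      rw [e1, e2]
      exact hd
    -- compact closure of s in C(ℝ, M) via Arzelà–Ascoli
    have hcls : IsCompact (closure s) := by
      refine ArzelaAscoli.isCompact_closure_of_isClosedEmbedding
        (F := fun g : C(ℝ, M) => (g : ℝ → M)) (𝔖 := {K : Set ℝ | IsCompact K})
        (fun K hK => hK) PathSpaceAux.clemb
        (fun K _ => heq.equicontinuousOn K) ?_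
      intro K hK t ht
      obtain ⟨α, hα, hmod⟩ := h₂ 1 one_pos (max R t)
        (fun p hp => le_max_of_le_left (hb p hp))
      set n : ℕ := ⌈(max R t + R) / (α / 2)⌉₊ with hn
      refine ⟨Metric.cthickening n K₂, hK₂.cthickening, ?_⟩
      rintro g ⟨p, hpF, rfl⟩
      have h1 : p.val.1 ≤ max t p.val.1 := le_max_right _ _
      have h2 : max t p.val.1 ≤ max R t :=
        max_le (le_max_right _ _) (le_max_of_le_left (hb p hpF))
      have h3 : max t p.val.1 - p.val.1 ≤ n * (α / 2) := by
        have hnle : (max R t + R) / (α / 2) ≤ (n : ℝ) := Nat.le_ceil _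
        have hmul : max R t + R ≤ (n : ℝ) * (α / 2) := by
          rw [div_le_iff₀ (by positivity)] at hnle; linarith
        have hlow : -R ≤ p.val.1 := neg_le_of_abs_le (hR p hpF)
        linarith
      have hchain := PathSpaceAux.chain F (max R t) α hα hmod n p hpF _ h1 h2 h3
      have heqv : p.val.2 t = p.val.2 (max t p.val.1) := by
        rcases le_total p.val.1 t with h | h
        · rw [max_eq_left h]
        · rw [max_eq_right h]; exact p.prop t h
      show p.val.2 t ∈ Metric.cthickening n K₂
      rw [heqv]
      exact Metric.mem_cthickening_of_dist_le _ _ _ _ (hmemK₂ p hpF)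
        (by rw [dist_comm]; exact hchain)
    -- assemble
    have hrange : IsClosed (range (Subtype.val : PathSpace M → ℝ × C(ℝ, M))) := by
      have : range (Subtype.val : PathSpace M → ℝ × C(ℝ, M))
          = {q : ℝ × C(ℝ, M) | ∀ t ≤ q.1, q.2 t = q.2 q.1} := Subtype.range_coe_subtype
      rw [this]
      exact PathSpaceAux.isClosed_constraint
    have hKK : IsCompact ((Subtype.val : PathSpace M → ℝ × C(ℝ, M)) ⁻¹'
        (Icc (-R) R ×ˢ closure s)) :=
      Topology.IsInducing.subtypeVal.isCompact_preimage hrange (isCompact_Icc.prod hcls)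
    refine hKK.of_isClosed_subset isClosed_closure (closure_minimal ?_ ?_)
    · intro p hp
      exact ⟨⟨neg_le_of_abs_le (hR p hp), hb p hp⟩, subset_closure (mem_image_of_mem _ hp)⟩
    · exact (isClosed_Icc.prod isClosed_closure).preimage continuous_subtype_val
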